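/- Let X and Y be Hilbert spaces and A : X → Y' a bounded linear operator that is injective with dense range, such that the adjoint A* : Y → X' is also injective with dense range, and suppose the norm on Y satisfies ‖v‖_Y = ‖A*v‖_{X'} for all v ∈ Y. Then A is an isometric isomorphism from X onto Y', i.e. ‖Au‖_{Y'} = ‖u‖_X for all u ∈ X and A is surjective. -/

import Mathlib

/-- If `A : X → Y'` and its adjoint `A* : Y → X'` are injective with dense
range, and the norm on `Y` is the optimal test norm `‖v‖_Y = ‖A*v‖_{X'}`, then `A` is an
isometric isomorphism from `X` onto `Y'`. -/
theorem stmt0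
    {X Y : Type*} [NormedAddCommGroup X] [InnerProductSpace ℝ X] [CompleteSpace X]
    [NormedAddCommGroup Y] [InnerProductSpace ℝ Y] [CompleteSpace Y]
    (A : X →L[ℝ] (Y →L[ℝ] ℝ)) (Astar : Y →L[ℝ] (X →L[ℝ] ℝ))
    (hAstar : ∀ (v : Y) (u : X), Astar v u = A u v)
    (hAinj : Function.Injective A) (hAdense : DenseRange A)
    (hASinj : Function.Injective Astar) (hASdense : DenseRange Astar)
    (hnorm : ∀ v : Y, ‖v‖ = ‖Astar v‖) :
    (∀ u : X, ‖A u‖ = ‖u‖) ∧ Function.Surjective A := by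
  have hle : ∀ u : X, ‖A u‖ ≤ ‖u‖ := by
    intro u
    refine ContinuousLinearMap.opNorm_le_bound _ (norm_nonneg u) (fun v => ?_)
    rw [← hAstar v u]
    calc ‖Astar v u‖ ≤ ‖Astar v‖ * ‖u‖ := (Astar v).le_opNorm u
      _ = ‖u‖ * ‖v‖ := by rw [← hnorm v]; ring
  have hge : ∀ u : X, ‖u‖ ≤ ‖A u‖ := by
    intro u
    rcases eq_or_ne u 0 with rfl | hu
    · simp
    have hupos : 0 < ‖u‖ := norm_pos_iff.mpr hu
    have key : ‖u‖ * ‖u‖ ≤ ‖A u‖ * ‖u‖ := by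
      refine le_of_forall_pos_le_add (fun ε hε => ?_)
      set f : X →L[ℝ] ℝ := (InnerProductSpace.toDual ℝ X u : X →L[ℝ] ℝ) with hf
      set δ : ℝ := ε / (‖A u‖ + ‖u‖ + 1) with hδdef
      have hδpos : 0 < δ := div_pos hε (by positivity)
      obtain ⟨v, hv⟩ := Metric.denseRange_iff.mp hASdense f δ hδpos
      rw [dist_eq_norm] at hv
      have hfu : f u = ‖u‖ * ‖u‖ := by
        simp [hf, InnerProductSpace.toDual_apply_apply, real_inner_self_eq_norm_mul_norm, sq]
      have hfn : ‖f‖ = ‖u‖ := by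
        rw [hf]; exact (InnerProductSpace.toDual ℝ X).norm_map u
      have h1 : ‖f u - Astar v u‖ ≤ δ * ‖u‖ := by
        have h := (f - Astar v).le_opNorm u
        simp only [ContinuousLinearMap.sub_apply] at h
        exact h.trans (mul_le_mul_of_nonneg_right hv.le (norm_nonneg u))
      have h2 : ‖Astar v‖ ≤ ‖u‖ + δ := by
        calc ‖Astar v‖ = ‖f - (f - Astar v)‖ := by rw [sub_sub_cancel]
          _ ≤ ‖f‖ + ‖f - Astar v‖ := norm_sub_le _ _
          _ ≤ ‖u‖ + δ := add_le_add hfn.le hv.le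
      have h3 : ‖Astar v u‖ ≤ ‖A u‖ * (‖u‖ + δ) := by
        rw [hAstar v u]
        calc ‖A u v‖ ≤ ‖A u‖ * ‖v‖ := (A u).le_opNorm v
          _ = ‖A u‖ * ‖Astar v‖ := by rw [hnorm v]
          _ ≤ ‖A u‖ * (‖u‖ + δ) :=
            mul_le_mul_of_nonneg_left h2 (norm_nonneg _)
      have h4 : ‖u‖ * ‖u‖ - δ * ‖u‖ ≤ Astar v u := by
        have := abs_le.mp (Real.norm_eq_abs _ ▸ h1)
        have hfu' := hfu
        linarith [this.2]
      have h5 : Astar v u ≤ ‖Astar v u‖ := le_abs_self _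
      have hδbound : δ * (‖A u‖ + ‖u‖) ≤ ε := by
        rw [hδdef]
        rw [div_mul_eq_mul_div, div_le_iff₀ (by positivity)]
        nlinarith [norm_nonneg (A u), hε.le]
      nlinarith [norm_nonneg (A u)]
    exact le_of_mul_le_mul_right key hupos
  have hisom : ∀ u : X, ‖A u‖ = ‖u‖ := fun u => le_antisymm (hle u) (hge u)
  refine ⟨hisom, ?_⟩
  have hiso : Isometry A := AddMonoidHomClass.isometry_of_norm A hisom
  have hclosed : IsClosed (Set.range A) := hiso.isClosedEmbedding.isClosed_range
  intro g
  have hg : g ∈ closure (Set.range A) := hAdense g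
  rwa [hclosed.closure_eq] at hg
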